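/- Let p, p', v ∈ ℝ^m with p ≠ p', let ρ ≥ 0 and R > 0 with ρ ≤ d(p, v) ≤ R, and suppose ⟨p' − p, v − p⟩ ≤ −ρ · d(p, p') (a strict pivot with margin ρ). If p'' is the point of the closed segment [p', v] closest to p, then d(p, p'')² ≤ d(p, p')² · (1 − ρ²/R²). -/

import Mathlib

open RealInnerProductSpace

/-- Progress with a strict pivot with margin `ρ`: if `ρ ≤ d(p, v) ≤ R` and
`⟨p' - p, v - p⟩ ≤ -ρ d(p, p')`, and `p''` is the point of `[p', v]` closest to `p`,
then `d(p, p'')² ≤ d(p, p')² (1 - ρ²/R²)`. -/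
theorem margin_pivot_step_progress {m : ℕ} (p p' v p'' : EuclideanSpace ℝ (Fin m))
    (hpp' : p ≠ p') (ρ R : ℝ) (hρ : 0 ≤ ρ) (hR : 0 < R)
    (hρv : ρ ≤ dist p v) (hvR : dist p v ≤ R)
    (hstrict : ⟪p' - p, v - p⟫ ≤ -ρ * dist p p')
    (hmem : p'' ∈ segment ℝ p' v)
    (hmin : ∀ x ∈ segment ℝ p' v, dist p p'' ≤ dist p x) :
    dist p p'' ^ 2 ≤ dist p p' ^ 2 * (1 - ρ ^ 2 / R ^ 2) := by
  have ha : dist p p' = ‖p' - p‖ := dist_eq_norm' p p'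
  have hb : dist p v = ‖v - p‖ := dist_eq_norm' p v
  set a := p' - p with ha'
  set b := v - p with hb'
  have hna : 0 < ‖a‖ := by
    rw [norm_pos_iff]
    simpa [ha', sub_eq_zero] using (Ne.symm hpp')
  set s := -⟪a, b⟫ with hs'
  have hsb : ρ * ‖a‖ ≤ s := by
    rw [ha] at hstrict
    simp only [hs']
    linarith
  have hs0 : 0 ≤ s := le_trans (by positivity) hsb
  have hρR : ρ ≤ R := le_trans hρv hvR
  have hbR : ‖b‖ ≤ R := hb ▸ hvR
  set c := ‖a‖ ^ 2 + s with hc'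
  have hiba : ⟪b, a⟫ = -s := by rw [real_inner_comm]; simp [hs']
  have hD : ‖b - a‖ ^ 2 = ‖a‖ ^ 2 + 2 * s + ‖b‖ ^ 2 := by
    rw [norm_sub_sq_real, hiba]; ring
  set D := ‖b - a‖ ^ 2 with hD'
  have hDpos : 0 < D := by nlinarith [sq_nonneg ‖b‖]
  have hcpos : 0 < c := by nlinarith
  have hcD : c ≤ D := by nlinarith [sq_nonneg ‖b‖]
  set t0 := c / D with ht0'
  have ht00 : 0 ≤ t0 := div_nonneg hcpos.le hDpos.le
  have ht01 : t0 ≤ 1 := (div_le_one hDpos).mpr hcD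
  set x := p' + t0 • (v - p') with hx'
  have hxmem : x ∈ segment ℝ p' v := by
    rw [segment_eq_image']
    exact ⟨t0, ⟨ht00, ht01⟩, rfl⟩
  have hiac : ⟪a, b - a⟫ = -c := by
    rw [inner_sub_right, real_inner_self_eq_norm_sq]
    simp only [hc', hs']; ring
  have hfx : dist p x ^ 2 = ‖a‖ ^ 2 - 2 * t0 * c + t0 ^ 2 * D := by
    rw [dist_eq_norm']
    have hxp : x - p = a + t0 • (b - a) := by
      simp only [hx', ha', hb', smul_sub]
      abel
    rw [hxp, norm_add_sq_real, inner_smul_right, hiac, norm_smul,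
      Real.norm_eq_abs, abs_of_nonneg ht00, mul_pow]
    ring
  clear_value a b s c D t0 x
  have hkey : ρ ^ 2 * ‖a‖ ^ 2 * D ≤ c ^ 2 * R ^ 2 := by
    have h1 : ρ ^ 2 ≤ R ^ 2 := pow_le_pow_left₀ hρ hρR 2
    have h2 : ‖b‖ ^ 2 ≤ R ^ 2 := pow_le_pow_left₀ (norm_nonneg b) hbR 2
    have h3 : ρ ^ 2 * ‖a‖ ^ 2 ≤ s ^ 2 := by
      have := pow_le_pow_left₀ (mul_nonneg hρ hna.le) hsb 2
      calc ρ ^ 2 * ‖a‖ ^ 2 = (ρ * ‖a‖) ^ 2 := by ring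
        _ ≤ s ^ 2 := this
    have t1 : ρ ^ 2 * (‖a‖ ^ 2 * ‖a‖ ^ 2) ≤ R ^ 2 * (‖a‖ ^ 2 * ‖a‖ ^ 2) :=
      mul_le_mul_of_nonneg_right h1 (by positivity)
    have t2 : ρ ^ 2 * (2 * s * ‖a‖ ^ 2) ≤ R ^ 2 * (2 * s * ‖a‖ ^ 2) :=
      mul_le_mul_of_nonneg_right h1 (by positivity)
    have t3 : ρ ^ 2 * ‖a‖ ^ 2 * ‖b‖ ^ 2 ≤ R ^ 2 * s ^ 2 := by
      calc ρ ^ 2 * ‖a‖ ^ 2 * ‖b‖ ^ 2 ≤ ρ ^ 2 * ‖a‖ ^ 2 * R ^ 2 :=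
            mul_le_mul_of_nonneg_left h2 (by positivity)
        _ ≤ s ^ 2 * R ^ 2 := mul_le_mul_of_nonneg_right h3 (by positivity)
        _ = R ^ 2 * s ^ 2 := by ring
    rw [hD, hc']
    calc ρ ^ 2 * ‖a‖ ^ 2 * (‖a‖ ^ 2 + 2 * s + ‖b‖ ^ 2)
        = ρ ^ 2 * (‖a‖ ^ 2 * ‖a‖ ^ 2) + ρ ^ 2 * (2 * s * ‖a‖ ^ 2)
          + ρ ^ 2 * ‖a‖ ^ 2 * ‖b‖ ^ 2 := by ring
      _ ≤ R ^ 2 * (‖a‖ ^ 2 * ‖a‖ ^ 2) + R ^ 2 * (2 * s * ‖a‖ ^ 2)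
          + R ^ 2 * s ^ 2 := add_le_add (add_le_add t1 t2) t3
      _ = (‖a‖ ^ 2 + s) ^ 2 * R ^ 2 := by ring
  have hstep : dist p p'' ^ 2 ≤ dist p x ^ 2 := by
    have := hmin x hxmem
    exact pow_le_pow_left₀ dist_nonneg this 2
  have hval : ‖a‖ ^ 2 - 2 * t0 * c + t0 ^ 2 * D = ‖a‖ ^ 2 - c ^ 2 / D := by
    field_simp [ht0']
    rw [ht0']; field_simp; ring
  have hfin : ‖a‖ ^ 2 - c ^ 2 / D ≤ ‖a‖ ^ 2 * (1 - ρ ^ 2 / R ^ 2) := by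
    have h4 : ρ ^ 2 * ‖a‖ ^ 2 / R ^ 2 ≤ c ^ 2 / D := by
      rw [div_le_div_iff₀ (by positivity) hDpos]
      linarith
    have : ‖a‖ ^ 2 * (1 - ρ ^ 2 / R ^ 2) = ‖a‖ ^ 2 - ρ ^ 2 * ‖a‖ ^ 2 / R ^ 2 := by
      ring
    linarith
  calc dist p p'' ^ 2 ≤ dist p x ^ 2 := hstep
    _ = ‖a‖ ^ 2 - c ^ 2 / D := by rw [hfx, hval]
    _ ≤ ‖a‖ ^ 2 * (1 - ρ ^ 2 / R ^ 2) := hfin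
    _ = dist p p' ^ 2 * (1 - ρ ^ 2 / R ^ 2) := by rw [ha]
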